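/- Let (X, μ) be a finite measure space, p > n ≥ 1 real numbers, and q = p(n+1)/(p(n+1) − n). Suppose g ≥ 0 is measurable with ∫ g dμ finite, u ≥ 0 is measurable, and set A = ∫ u·g dμ. If ∫ u^{(n+1)p/n} g dμ ≤ M · A^{p/n} for some M > 0, then A ≤ M^{1/p} · (∫ g dμ)^{(n+1)/(qn)}, and the exponent satisfies (n+1)/(qn) = 1 + (p−n)/(pn) > 1. -/

import Mathlib

open MeasureTheory

/-- Hölder step: from `∫ u^{(n+1)p/n} g ≤ M·A^{p/n}` with `A = ∫ u g`, conclude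
`A ≤ M^{1/p}·(∫ g)^{(n+1)/(qn)}`, where `q = p(n+1)/(p(n+1)-n)` and the exponent
`(n+1)/(qn) = 1 + (p-n)/(pn) > 1`. -/
theorem holder_self_improvement {X : Type*} [MeasurableSpace X] (μ : Measure X)
    [IsFiniteMeasure μ] (n p q M : ℝ) (hn : 1 ≤ n) (hp : n < p)
    (hq : q = p * (n+1) / (p * (n+1) - n)) (hM : 0 < M)
    (g u : X → ℝ) (hg : ∀ x, 0 ≤ g x) (hu : ∀ x, 0 ≤ u x)
    (hgint : Integrable g μ)
    (hugint : Integrable (fun x => u x * g x) μ)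
    (hpowint : Integrable (fun x => (u x) ^ ((n+1) * p / n) * g x) μ)
    (hbound : ∫ x, (u x) ^ ((n+1) * p / n) * g x ∂μ
        ≤ M * (∫ x, u x * g x ∂μ) ^ (p / n)) :
    (∫ x, u x * g x ∂μ) ≤ M ^ (1/p) * (∫ x, g x ∂μ) ^ ((n+1)/(q*n)) ∧
    (n+1)/(q*n) = 1 + (p-n)/(p*n) ∧ 1 < (n+1)/(q*n) := by
  have hn0 : (0:ℝ) < n := lt_of_lt_of_le one_pos hn
  have hp0 : (0:ℝ) < p := hn0.trans hp
  have hden : (0:ℝ) < p * (n+1) - n := by nlinarith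
  have hq0 : (0:ℝ) < q := by rw [hq]; positivity
  set r : ℝ := (n+1) * p / n with hr
  have hr1 : 1 < r := by
    rw [hr, lt_div_iff₀ hn0]; nlinarith
  have hr0 : (0:ℝ) < r := lt_trans one_pos hr1
  have hconj : Real.HolderConjugate r q := by
    refine Real.holderConjugate_iff.mpr ⟨hr1, ?_⟩
    rw [hq, hr]
    field_simp
    ring
  have hinv : 1/r + 1/q = 1 := by
    simpa [one_div] using hconj.inv_add_inv_eq_one
  -- second and third parts of the conclusion
  have hqn : q * n ≠ 0 := by positivity
  have hexp : (n+1)/(q*n) = 1 + (p-n)/(p*n) := by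
    rw [hq]
    field_simp
    ring
  have hexp1 : 1 < (n+1)/(q*n) := by
    rw [hexp]
    have : 0 < (p-n)/(p*n) := by
      apply div_pos (by linarith) (by positivity)
    linarith
  refine ⟨?_, hexp, hexp1⟩
  -- main inequality
  set A : ℝ := ∫ x, u x * g x ∂μ with hA
  set G : ℝ := ∫ x, g x ∂μ with hG
  set B : ℝ := ∫ x, u x ^ r * g x ∂μ with hB
  have hA0 : 0 ≤ A := integral_nonneg fun x => mul_nonneg (hu x) (hg x)
  have hG0 : 0 ≤ G := integral_nonneg hg
  have hB0 : 0 ≤ B := integral_nonneg fun x => mul_nonneg (Real.rpow_nonneg (hu x) r) (hg x)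
  -- Hölder setup
  set f : X → ℝ := fun x => u x * g x ^ (1/r) with hf
  set gf : X → ℝ := fun x => g x ^ (1/q) with hgf
  have hf_nonneg : ∀ x, 0 ≤ f x := fun x => mul_nonneg (hu x) (Real.rpow_nonneg (hg x) _)
  have hfr : ∀ x, f x ^ r = u x ^ r * g x := by
    intro x
    rw [hf]
    rw [Real.mul_rpow (hu x) (Real.rpow_nonneg (hg x) _)]
    congr 1
    rw [← Real.rpow_mul (hg x), one_div, inv_mul_cancel₀ hr0.ne', Real.rpow_one]
  have hfeq : ∀ x, f x = (u x ^ r * g x) ^ (1/r) := by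
    intro x
    rw [← hfr x, ← Real.rpow_mul (hf_nonneg x), mul_one_div, div_self hr0.ne',
      Real.rpow_one]
  have hpow_aesm : AEStronglyMeasurable (fun x => u x ^ r * g x) μ := hpowint.1
  have hf_aesm : AEStronglyMeasurable f μ := by
    have : AEStronglyMeasurable (fun x => (u x ^ r * g x) ^ (1/r)) μ :=
      (hpow_aesm.aemeasurable.pow aemeasurable_const).aestronglyMeasurable
    exact this.congr (Filter.Eventually.of_forall fun x => (hfeq x).symm)
  have hg_aesm : AEStronglyMeasurable g μ := hgint.1
  have hgf_aesm : AEStronglyMeasurable gf μ :=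
    (hg_aesm.aemeasurable.pow aemeasurable_const).aestronglyMeasurable
  have hofr0 : ENNReal.ofReal r ≠ 0 := by
    simp [ENNReal.ofReal_eq_zero, not_le, hr0]
  have hofq0 : ENNReal.ofReal q ≠ 0 := by
    simp [ENNReal.ofReal_eq_zero, not_le, hq0]
  have hfmem : MemLp f (ENNReal.ofReal r) μ := by
    have h1 : MemLp (fun x => ‖f x‖ ^ (ENNReal.ofReal r).toReal)
        (ENNReal.ofReal r / ENNReal.ofReal r) μ := by
      rw [ENNReal.div_self hofr0 ENNReal.ofReal_ne_top, memLp_one_iff_integrable]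
      refine hpowint.congr (Filter.Eventually.of_forall fun x => ?_)
      show u x ^ r * g x = ‖f x‖ ^ (ENNReal.ofReal r).toReal
      rw [ENNReal.toReal_ofReal hr0.le, Real.norm_of_nonneg (hf_nonneg x), hfr x]
    exact (memLp_norm_rpow_iff hf_aesm hofr0 ENNReal.ofReal_ne_top).mp h1
  have hgfmem : MemLp gf (ENNReal.ofReal q) μ := by
    have h1 : MemLp (fun x => ‖gf x‖ ^ (ENNReal.ofReal q).toReal)
        (ENNReal.ofReal q / ENNReal.ofReal q) μ := by
      rw [ENNReal.div_self hofq0 ENNReal.ofReal_ne_top, memLp_one_iff_integrable]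
      refine hgint.congr (Filter.Eventually.of_forall fun x => ?_)
      show g x = ‖gf x‖ ^ (ENNReal.ofReal q).toReal
      rw [ENNReal.toReal_ofReal hq0.le, Real.norm_of_nonneg (Real.rpow_nonneg (hg x) _)]
      show g x = (g x ^ (1/q)) ^ q
      rw [← Real.rpow_mul (hg x), one_div, inv_mul_cancel₀ hq0.ne', Real.rpow_one]
    exact (memLp_norm_rpow_iff hgf_aesm hofq0 ENNReal.ofReal_ne_top).mp h1
  have hHolder := integral_mul_le_Lp_mul_Lq_of_nonneg hconj
    (Filter.Eventually.of_forall hf_nonneg)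
    (Filter.Eventually.of_forall fun x => Real.rpow_nonneg (hg x) (1/q))
    hfmem hgfmem
  have hLHS : ∫ x, f x * gf x ∂μ = A := by
    refine integral_congr_ae (Filter.Eventually.of_forall fun x => ?_)
    show u x * g x ^ (1/r) * g x ^ (1/q) = u x * g x
    rw [mul_assoc, ← Real.rpow_add' (hg x) (by rw [hinv]; norm_num), hinv, Real.rpow_one]
  have hFr : ∫ x, f x ^ r ∂μ = B := integral_congr_ae
    (Filter.Eventually.of_forall fun x => hfr x)
  have hGq : ∫ x, gf x ^ q ∂μ = G := by
    refine integral_congr_ae (Filter.Eventually.of_forall fun x => ?_)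
    show (g x ^ (1/q)) ^ q = g x
    rw [← Real.rpow_mul (hg x), one_div, inv_mul_cancel₀ hq0.ne', Real.rpow_one]
  rw [hLHS, hFr, hGq] at hHolder
  -- A ≤ B^(1/r) * G^(1/q) and B ≤ M * A^(p/n)
  have step1 : A ≤ (M * A ^ (p/n)) ^ (1/r) * G ^ (1/q) := by
    refine hHolder.trans (mul_le_mul_of_nonneg_right ?_ (Real.rpow_nonneg hG0 _))
    exact Real.rpow_le_rpow hB0 hbound (by positivity)
  have hMA : (M * A ^ (p/n)) ^ (1/r) = M ^ (1/r) * A ^ (1/(n+1)) := by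
    rw [Real.mul_rpow hM.le (Real.rpow_nonneg hA0 _), ← Real.rpow_mul hA0]
    congr 2
    rw [hr]
    field_simp
  rw [hMA] at step1
  rcases eq_or_lt_of_le hA0 with h0 | hApos
  · rw [← h0]
    positivity
  · -- cancel A^(1/(n+1))
    have hsplit : A = A ^ (n/(n+1)) * A ^ (1/(n+1)) := by
      rw [← Real.rpow_add hApos, ← add_div,
        div_self (show (n+1:ℝ) ≠ 0 by positivity), Real.rpow_one]
    have step2 : A ^ (n/(n+1)) ≤ M ^ (1/r) * G ^ (1/q) := by
      have hApow : (0:ℝ) < A ^ (1/(n+1)) := Real.rpow_pos_of_pos hApos _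
      rw [← mul_le_mul_iff_left₀ hApow, ← hsplit]
      calc A ≤ M ^ (1/r) * A ^ (1/(n+1)) * G ^ (1/q) := step1
        _ = M ^ (1/r) * G ^ (1/q) * A ^ (1/(n+1)) := by ring
    have step3 := Real.rpow_le_rpow (Real.rpow_nonneg hA0 _) step2
      (show (0:ℝ) ≤ (n+1)/n by positivity)
    rw [← Real.rpow_mul hA0, Real.mul_rpow (Real.rpow_nonneg hM.le _)
      (Real.rpow_nonneg hG0 _), ← Real.rpow_mul hM.le, ← Real.rpow_mul hG0] at step3
    have e1 : n/(n+1) * ((n+1)/n) = 1 := by field_simp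
    have e2 : 1/r * ((n+1)/n) = 1/p := by rw [hr]; field_simp
    have e3 : 1/q * ((n+1)/n) = (n+1)/(q*n) := by field_simp
    rw [e1, e2, e3, Real.rpow_one] at step3
    exact step3
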